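/- Let G be a 3-connected graph with edge (s,t), and let E1, ..., Eq be all its 3-edge s,t-cuts, ordered so that V^s(E_1) ⊂ V^s(E_2) ⊂ ... ⊂ V^s(E_q). Each E_i contains the edge (s,t). Setting V_0 = V^s(E_1), V_q = V^t(E_q), and V_i = V^s(E_{i+1}) \ V^s(E_i) for 1 ≤ i ≤ q−1, each V_i is non-empty, and in G minus the edge (s,t), the two edges of E_i \ {(s,t)} both join V_{i−1} to V_i; no edge of G minus (s,t) joins V_j to V_k for |j − k| ≥ 2. -/

import Mathlib

/-- `G` is `k`-vertex-connected: more than `k` vertices and no set of fewer than `k`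
vertices disconnects it. -/
def IsKConnected {V : Type*} [Fintype V] (G : SimpleGraph V) (k : ℕ) : Prop :=
  k + 1 ≤ Fintype.card V ∧
    ∀ S : Finset V, S.card < k → (G.induce (↑S : Set V)ᶜ).Connected

/-- `F` is a minimal `s,t`-edge-cut of `G`. -/
def IsMinimalSTCut {V : Type*} (G : SimpleGraph V) (s t : V)
    (F : Finset (Sym2 V)) : Prop :=
  ↑F ⊆ G.edgeSet ∧ ¬ (G.deleteEdges ↑F).Reachable s t ∧
    ∀ F' : Finset (Sym2 V), F' ⊂ F → (G.deleteEdges ↑F').Reachable s t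

/-- The side of the cut `F` containing `s`. -/
def cutSideS {V : Type*} (G : SimpleGraph V) (F : Finset (Sym2 V)) (s : V) : Set V :=
  {v | (G.deleteEdges ↑F).Reachable s v}

/-- The pieces `V_0, …, V_q` of `V` determined by the nested 3-edge `s,t`-cuts
`E 1, …, E q`:  `V_0 = V^s(E_1)`, `V_i = V^s(E_{i+1}) \ V^s(E_i)` for
`1 ≤ i ≤ q-1`, and `V_q = V^t(E_q) = (V^s(E_q))ᶜ`. -/
def piece {V : Type*} (G : SimpleGraph V) (s : V) (E : ℕ → Finset (Sym2 V))
    (q : ℕ) : ℕ → Set V := fun i =>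
  if i = 0 then cutSideS G (E 1) s
  else if i < q then cutSideS G (E (i + 1)) s \ cutSideS G (E i) s
  else (cutSideS G (E q) s)ᶜ

section Aux

variable {V : Type*}

lemma reach_ind (H : SimpleGraph V) (P : V → Prop)
    (h : ∀ x y, H.Adj x y → P x → P y) {u v : V}
    (hr : H.Reachable u v) (hu : P u) : P v := by
  obtain ⟨w⟩ := hr
  induction w with
  | nil => exact hu
  | cons a _ ih => exact ih (h _ _ a hu)

lemma mem_cutSideS {G : SimpleGraph V} {F : Finset (Sym2 V)} {s v : V} :
    v ∈ cutSideS G F s ↔ (G.deleteEdges ↑F).Reachable s v := Iff.rfl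

lemma s_mem_cutSideS (G : SimpleGraph V) (F : Finset (Sym2 V)) (s : V) :
    s ∈ cutSideS G F s := SimpleGraph.Reachable.refl s

lemma t_not_mem_cutSideS {G : SimpleGraph V} {s t : V} {F : Finset (Sym2 V)}
    (hF : IsMinimalSTCut G s t F) : t ∉ cutSideS G F s := hF.2.1

lemma cut_mem_st (G : SimpleGraph V) {s t : V} (hst : s(s,t) ∈ G.edgeSet)
    {F : Finset (Sym2 V)} (hF : IsMinimalSTCut G s t F) : s(s,t) ∈ F := by
  by_contra h
  exact hF.2.1 (SimpleGraph.Adj.reachable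
    (SimpleGraph.deleteEdges_adj.mpr ⟨hst, by simpa using h⟩))

lemma cross_mem (G : SimpleGraph V) {s : V} {F : Finset (Sym2 V)} {x y : V}
    (hx : x ∈ cutSideS G F s) (hy : y ∉ cutSideS G F s) (hadj : G.Adj x y) :
    s(x,y) ∈ F := by
  by_contra h
  exact hy (hx.trans (SimpleGraph.Adj.reachable
    (SimpleGraph.deleteEdges_adj.mpr ⟨hadj, by simpa using h⟩)))

lemma cut_edge_endpoints (G : SimpleGraph V) {s t : V} {F : Finset (Sym2 V)}
    (hF : IsMinimalSTCut G s t F) {e : Sym2 V} (he : e ∈ F) :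
    ∃ a b, e = s(a,b) ∧ a ∈ cutSideS G F s ∧ b ∉ cutSideS G F s := by
  classical
  have hr := hF.2.2 (F.erase e) (Finset.erase_ssubset he)
  obtain ⟨w⟩ := hr
  have key : ∀ (u x : V) (_ : (G.deleteEdges ↑(F.erase e)).Walk u x),
      ¬ (G.deleteEdges ↑F).Reachable s x →
      (G.deleteEdges ↑F).Reachable s u →
      ∃ a b, e = s(a,b) ∧ a ∈ cutSideS G F s ∧ b ∉ cutSideS G F s := by
    intro u x w
    induction w with
    | nil => exact fun hc h => absurd h hc
    | @cons u v _ hadj _ ih =>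
      intro hc hu
      by_cases hv : (G.deleteEdges ↑F).Reachable s v
      · exact ih hc hv
      · have h1 := SimpleGraph.deleteEdges_adj.mp hadj
        have h2 : s(u,v) ∈ F := by
          by_contra h
          exact hv (hu.trans (SimpleGraph.Adj.reachable
            (SimpleGraph.deleteEdges_adj.mpr ⟨h1.1, by simpa using h⟩)))
        have h3 : s(u,v) = e := by
          have h4 := h1.2
          simp only [Finset.coe_erase, Set.mem_diff, Finset.mem_coe,
            Set.mem_singleton_iff, not_and, not_not] at h4
          exact h4 h2
        exact ⟨u, v, h3.symm, hu, hv⟩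
  exact key s t w hF.2.1 (SimpleGraph.Reachable.refl s)

variable (G : SimpleGraph V) (s : V) (E : ℕ → Finset (Sym2 V)) (q : ℕ)

lemma side_mono (hnested : ∀ i, 1 ≤ i → i < q →
      cutSideS G (E i) s ⊂ cutSideS G (E (i + 1)) s)
    {i m : ℕ} (h1 : 1 ≤ i) (him : i ≤ m) (hmq : m ≤ q) :
    cutSideS G (E i) s ⊆ cutSideS G (E m) s := by
  induction m, him using Nat.le_induction with
  | base => exact subset_rfl
  | succ m hm ih =>
    exact (ih (by omega)).trans (hnested m (by omega) (by omega)).subset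

lemma piece_sub {j : ℕ} (hj : j < q) :
    piece G s E q j ⊆ cutSideS G (E (j+1)) s := by
  by_cases h0 : j = 0
  · subst h0; simp only [piece, if_pos rfl]; exact subset_rfl
  · simp only [piece, if_neg h0, if_pos hj]; exact Set.diff_subset

lemma piece_disj {j : ℕ} (hj : 1 ≤ j) (hjq : j ≤ q) {v : V}
    (hv : v ∈ piece G s E q j) : v ∉ cutSideS G (E j) s := by
  by_cases hlt : j < q
  · simp only [piece, if_neg (by omega : ¬ j = 0), if_pos hlt] at hv
    exact hv.2
  · have hjq' : j = q := by omega
    simp only [piece, if_neg (by omega : ¬ j = 0), if_neg hlt] at hv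
    rw [hjq']; exact hv

lemma piece_cover (hq : 1 ≤ q) (v : V) :
    ∃ j, j ≤ q ∧ v ∈ piece G s E q j := by
  classical
  by_cases hvq : v ∈ cutSideS G (E q) s
  · have hex : ∃ m, v ∈ cutSideS G (E (m+1)) s :=
      ⟨q - 1, by rwa [Nat.sub_add_cancel hq]⟩
    have hj1 : v ∈ cutSideS G (E (Nat.find hex + 1)) s := Nat.find_spec hex
    have hjle : Nat.find hex ≤ q - 1 := Nat.find_le (by rwa [Nat.sub_add_cancel hq])
    by_cases hj0 : Nat.find hex = 0
    · refine ⟨0, by omega, ?_⟩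
      rw [hj0] at hj1
      simpa only [piece, if_pos rfl, ↓reduceIte, zero_add] using hj1
    · refine ⟨Nat.find hex, by omega, ?_⟩
      have hnot : v ∉ cutSideS G (E (Nat.find hex)) s := by
        have h5 := Nat.find_min hex (show Nat.find hex - 1 < Nat.find hex by omega)
        rwa [show Nat.find hex - 1 + 1 = Nat.find hex by omega] at h5
      simp only [piece, if_neg hj0, if_pos (show Nat.find hex < q by omega)]
      exact ⟨hj1, hnot⟩
  · refine ⟨q, le_rfl, ?_⟩
    simp only [piece, if_neg (by omega : ¬ q = 0), if_neg (lt_irrefl q)]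
    exact hvq

end Aux

theorem no_far_edge {V : Type*} [Fintype V]
    (G : SimpleGraph V) (h3 : IsKConnected G 3)
    (s t : V) (hst : s(s, t) ∈ G.edgeSet)
    (q : ℕ) (E : ℕ → Finset (Sym2 V))
    (hall : ∀ F : Finset (Sym2 V),
      (IsMinimalSTCut G s t F ∧ F.card = 3) ↔ ∃ i, 1 ≤ i ∧ i ≤ q ∧ F = E i)
    (hnested : ∀ i, 1 ≤ i → i < q →
      cutSideS G (E i) s ⊂ cutSideS G (E (i + 1)) s)
    {j k : ℕ} {a b : V} (hjk : j + 2 ≤ k) (hkq : k ≤ q)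
    (ha : a ∈ piece G s E q j) (hb : b ∈ piece G s E q k)
    (hadj : G.Adj a b) (hne : s(a, b) ≠ s(s, t)) : False := by
  classical
  have hmin : ∀ i, 1 ≤ i → i ≤ q →
      IsMinimalSTCut G s t (E i) ∧ (E i).card = 3 :=
    fun i h1 h2 => (hall (E i)).mpr ⟨i, h1, h2, rfl⟩
  have hj1q : j + 1 < q := by omega
  have hj2q : j + 2 ≤ q := by omega
  -- a is in the s-side of E (j+1)
  have ha1 : a ∈ cutSideS G (E (j+1)) s := piece_sub G s E q (by omega) ha
  have ha2 : a ∈ cutSideS G (E (j+2)) s :=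
    side_mono G s E q hnested (by omega) (by omega) hj2q ha1
  -- b is outside the s-side of E (j+2)
  have hb2 : b ∉ cutSideS G (E (j+2)) s := by
    intro hmem
    exact piece_disj G s E q (by omega) hkq hb
      (side_mono G s E q hnested (by omega) hjk hkq hmem)
  have hb1 : b ∉ cutSideS G (E (j+1)) s := fun hmem =>
    hb2 (side_mono G s E q hnested (by omega) (by omega) hj2q hmem)
  -- the edge (a,b) lies in both cuts
  have hea : s(a,b) ∈ E (j+1) := cross_mem G ha1 hb1 hadj
  have heb : s(a,b) ∈ E (j+2) := cross_mem G ha2 hb2 hadj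
  have hst1 : s(s,t) ∈ E (j+1) := cut_mem_st G hst (hmin (j+1) (by omega) (by omega)).1
  have hst2 : s(s,t) ∈ E (j+2) := cut_mem_st G hst (hmin (j+2) (by omega) hj2q).1
  -- third edges f and g of the two cuts
  have hthird : ∀ m, 1 ≤ m → m ≤ q → s(a,b) ∈ E m →
      ∃ f, f ∈ E m ∧ ∀ x ∈ E m, x ≠ s(s,t) → x ≠ s(a,b) → x = f := by
    intro m h1 h2 hab
    have hstm : s(s,t) ∈ E m := cut_mem_st G hst (hmin m h1 h2).1
    have hc1 : ((E m).erase s(s,t)).card = 2 := by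
      rw [Finset.card_erase_of_mem hstm, (hmin m h1 h2).2]
    have hmem1 : s(a,b) ∈ (E m).erase s(s,t) := Finset.mem_erase.mpr ⟨hne, hab⟩
    have hc2 : (((E m).erase s(s,t)).erase s(a,b)).card = 1 := by
      rw [Finset.card_erase_of_mem hmem1, hc1]
    obtain ⟨f, hf⟩ := Finset.card_eq_one.mp hc2
    refine ⟨f, ?_, ?_⟩
    · have : f ∈ ((E m).erase s(s,t)).erase s(a,b) := hf ▸ Finset.mem_singleton_self f
      exact Finset.mem_of_mem_erase (Finset.mem_of_mem_erase this)
    · intro x hx h1' h2'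
      have : x ∈ ((E m).erase s(s,t)).erase s(a,b) :=
        Finset.mem_erase.mpr ⟨h2', Finset.mem_erase.mpr ⟨h1', hx⟩⟩
      rw [hf] at this
      exact Finset.mem_singleton.mp this
  obtain ⟨f, hfmem, hfprop⟩ := hthird (j+1) (by omega) (by omega) hea
  obtain ⟨g, hgmem, hgprop⟩ := hthird (j+2) (by omega) hj2q heb
  obtain ⟨p, p', hfe, hp, hp'⟩ :=
    cut_edge_endpoints G (hmin (j+1) (by omega) (by omega)).1 hfmem
  obtain ⟨r, r', hge, hr, hr'⟩ :=
    cut_edge_endpoints G (hmin (j+2) (by omega) hj2q).1 hgmem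
  -- the middle region
  set D : Set V := cutSideS G (E (j+2)) s \ cutSideS G (E (j+1)) s with hD
  have hsD : s ∉ D := fun h => h.2 (s_mem_cutSideS G (E (j+1)) s)
  have htD : t ∉ D := fun h =>
    t_not_mem_cutSideS (hmin (j+2) (by omega) hj2q).1 h.1
  have haD : a ∉ D := fun h => h.2 ha1
  have hbD : b ∉ D := fun h => hb2 h.1
  have hpD : p ∉ D := fun h => h.2 hp
  have hr'D : r' ∉ D := fun h => hr' h.1
  -- boundary edges of D all end at p or r'
  have hbd : ∀ x y, x ∈ D → y ∉ D → G.Adj x y → y = p ∨ y = r' := by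
    intro x y hx hy hxy
    by_cases hy1 : y ∈ cutSideS G (E (j+1)) s
    · have hxyE : s(x,y) ∈ E (j+1) := by
        rw [Sym2.eq_swap]; exact cross_mem G hy1 hx.2 hxy.symm
      have h1 : s(x,y) ≠ s(s,t) := by
        intro h
        rcases Sym2.eq_iff.mp h with ⟨hxs, _⟩ | ⟨hxt, _⟩
        · exact hx.2 (hxs ▸ s_mem_cutSideS G (E (j+1)) s)
        · exact t_not_mem_cutSideS (hmin (j+2) (by omega) hj2q).1 (hxt ▸ hx.1)
      have h2 : s(x,y) ≠ s(a,b) := by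
        intro h
        rcases Sym2.eq_iff.mp h with ⟨hxa, _⟩ | ⟨hxb, _⟩
        · exact hx.2 (hxa ▸ ha1)
        · exact hb2 (hxb ▸ hx.1)
      have hxyf : s(x,y) = f := hfprop _ hxyE h1 h2
      rw [hfe] at hxyf
      rcases Sym2.eq_iff.mp hxyf with ⟨hxp, hyp'⟩ | ⟨hxp', hyp⟩
      · exact absurd (hxp ▸ hp) hx.2
      · exact Or.inl hyp
    · have hy2 : y ∉ cutSideS G (E (j+2)) s := fun h => hy ⟨h, hy1⟩
      have hxyE : s(x,y) ∈ E (j+2) := cross_mem G hx.1 hy2 hxy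
      have h1 : s(x,y) ≠ s(s,t) := by
        intro h
        rcases Sym2.eq_iff.mp h with ⟨hxs, _⟩ | ⟨hxt, _⟩
        · exact hx.2 (hxs ▸ s_mem_cutSideS G (E (j+1)) s)
        · exact t_not_mem_cutSideS (hmin (j+2) (by omega) hj2q).1 (hxt ▸ hx.1)
      have h2 : s(x,y) ≠ s(a,b) := by
        intro h
        rcases Sym2.eq_iff.mp h with ⟨hxa, _⟩ | ⟨hxb, _⟩
        · exact hx.2 (hxa ▸ ha1)
        · exact hb2 (hxb ▸ hx.1)
      have hxyg : s(x,y) = g := hgprop _ hxyE h1 h2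
      rw [hge] at hxyg
      rcases Sym2.eq_iff.mp hxyg with ⟨hxr, hyr'⟩ | ⟨hxr', hyr⟩
      · exact Or.inr hyr'
      · exact absurd (hxr' ▸ hx.1) hr'
  -- D is nonempty
  obtain ⟨x0, hx0m, hx0n⟩ := Set.exists_of_ssubset (hnested (j+1) (by omega) hj1q)
  have hx0 : x0 ∈ D := ⟨hx0m, hx0n⟩
  -- S = {p, r'}
  set S : Finset V := {p, r'} with hS
  by_cases hy0 : ∃ y, y ∉ D ∧ y ≠ p ∧ y ≠ r'
  · obtain ⟨y0, hy0D, hy0p, hy0r⟩ := hy0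
    have hcard : S.card < 3 := by
      rw [hS]
      have := Finset.card_insert_le p ({r'} : Finset V)
      simp only [Finset.card_singleton] at this
      omega
    have hconn := h3.2 S hcard
    have hx0S : x0 ∈ (↑S : Set V)ᶜ := by
      simp only [hS, Finset.coe_insert, Finset.coe_singleton, Set.mem_compl_iff,
        Set.mem_insert_iff, Set.mem_singleton_iff]
      push_neg
      exact ⟨fun h => hpD (h ▸ hx0), fun h => hr'D (h ▸ hx0)⟩
    have hy0S : y0 ∈ (↑S : Set V)ᶜ := by
      simp only [hS, Finset.coe_insert, Finset.coe_singleton, Set.mem_compl_iff,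
        Set.mem_insert_iff, Set.mem_singleton_iff]
      push_neg
      exact ⟨hy0p, hy0r⟩
    have hreach := hconn.preconnected ⟨x0, hx0S⟩ ⟨y0, hy0S⟩
    have hfinal : y0 ∈ D := by
      refine reach_ind _ (fun z => z.1 ∈ D) ?_ hreach hx0
      rintro ⟨x, hxS⟩ ⟨y, hyS⟩ hadj' hxD
      by_contra hyD
      have hadj'' : G.Adj x y := hadj'
      rcases hbd x y hxD hyD hadj'' with h | h
      · subst h
        exact hyS (by simp [hS])
      · subst h
        exact hyS (by simp [hS])
    exact hy0D hfinal
  · push_neg at hy0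
    have hsnt : s ≠ t := (G.mem_edgeSet.mp hst).ne
    have hat : a ≠ t := fun h =>
      t_not_mem_cutSideS (hmin (j+1) (by omega) (by omega)).1 (h ▸ ha1)
    have hbs : b ≠ s := fun h => hb2 (h ▸ s_mem_cutSideS G (E (j+2)) s)
    have hconv : ∀ z : V, z ∉ D → z = p ∨ z = r' := by
      intro z hz
      by_cases hzp : z = p
      · exact Or.inl hzp
      · exact Or.inr (hy0 z hz hzp)
    have hs' := hconv s hsD
    have ht' := hconv t htD
    have ha' := hconv a haD
    have hb' := hconv b hbD
    have has : a = s := by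
      rcases ha' with h|h <;> rcases hs' with h2|h2
      · exact h.trans h2.symm
      · rcases ht' with h3|h3
        · exact absurd (h.trans h3.symm) hat
        · exact absurd (h2.trans h3.symm) hsnt
      · rcases ht' with h3|h3
        · exact absurd (h2.trans h3.symm) hsnt
        · exact absurd (h.trans h3.symm) hat
      · exact h.trans h2.symm
    have hbt : b = t := by
      rcases hb' with h|h <;> rcases ht' with h2|h2
      · exact h.trans h2.symm
      · rcases hs' with h3|h3
        · exact absurd (h.trans h3.symm) hbs
        · exact absurd (h3.trans h2.symm) hsnt
      · rcases hs' with h3|h3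
        · exact absurd (h3.trans h2.symm) hsnt
        · exact absurd (h.trans h3.symm) hbs
      · exact h.trans h2.symm
    exact hne (by rw [has, hbt])

/-- Structure of the nested sequence of all 3-edge `s,t`-cuts `E 1 ⊂ … ⊂ E q` of a
3-connected graph `G` with `(s,t) ∈ E`: each cut contains the edge `(s,t)`, all
pieces are non-empty, the two remaining edges of `E i` join `V_{i-1}` to `V_i` in
`G` minus `(s,t)`, and no edge of `G` minus `(s,t)` joins pieces at distance ≥ 2. -/
theorem nested_cut_structure {V : Type*} [Fintype V]
    (G : SimpleGraph V) (h3 : IsKConnected G 3)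
    (s t : V) (hst : s(s, t) ∈ G.edgeSet)
    (q : ℕ) (hq : 1 ≤ q) (E : ℕ → Finset (Sym2 V))
    (hall : ∀ F : Finset (Sym2 V),
      (IsMinimalSTCut G s t F ∧ F.card = 3) ↔ ∃ i, 1 ≤ i ∧ i ≤ q ∧ F = E i)
    (hinj : ∀ i j, 1 ≤ i → i ≤ q → 1 ≤ j → j ≤ q → E i = E j → i = j)
    (hnested : ∀ i, 1 ≤ i → i < q →
      cutSideS G (E i) s ⊂ cutSideS G (E (i + 1)) s) :
    (∀ i, 1 ≤ i → i ≤ q → s(s, t) ∈ E i) ∧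
    (∀ i, i ≤ q → (piece G s E q i).Nonempty) ∧
    (∀ i, 1 ≤ i → i ≤ q → ∀ e ∈ E i, e ≠ s(s, t) →
      ∃ a ∈ piece G s E q (i - 1), ∃ b ∈ piece G s E q i, e = s(a, b)) ∧
    (∀ j k, j ≤ q → k ≤ q → j + 2 ≤ k →
      ∀ a ∈ piece G s E q j, ∀ b ∈ piece G s E q k,
        ¬ (G.deleteEdges {s(s, t)}).Adj a b) := by
  classical
  have hmin : ∀ i, 1 ≤ i → i ≤ q →
      IsMinimalSTCut G s t (E i) ∧ (E i).card = 3 :=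
    fun i h1 h2 => (hall (E i)).mpr ⟨i, h1, h2, rfl⟩
  refine ⟨?_, ?_, ?_, ?_⟩
  · exact fun i h1 h2 => cut_mem_st G hst (hmin i h1 h2).1
  · intro i hi
    by_cases h0 : i = 0
    · subst h0
      refine ⟨s, ?_⟩
      simp only [piece, if_pos rfl]
      exact s_mem_cutSideS G (E 1) s
    · by_cases hlt : i < q
      · obtain ⟨v, hv1, hv2⟩ := Set.exists_of_ssubset (hnested i (by omega) hlt)
        refine ⟨v, ?_⟩
        simp only [piece, if_neg h0, if_pos hlt]
        exact ⟨hv1, hv2⟩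
      · refine ⟨t, ?_⟩
        simp only [piece, if_neg h0, if_neg hlt]
        exact t_not_mem_cutSideS (hmin q hq le_rfl).1
  · intro i h1 h2 e he hne
    obtain ⟨a, b, heab, haS, hbS⟩ := cut_edge_endpoints G (hmin i h1 h2).1 he
    obtain ⟨j, hjq, haj⟩ := piece_cover G s E q hq a
    obtain ⟨k, hkq, hbk⟩ := piece_cover G s E q hq b
    have hji : j < i := by
      by_contra h
      push_neg at h
      exact piece_disj G s E q (by omega) hjq haj
        (side_mono G s E q hnested h1 h hjq haS)
    have hik : i ≤ k := by
      by_contra h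
      push_neg at h
      exact hbS (side_mono G s E q hnested (by omega) (by omega) h2
        (piece_sub G s E q (by omega) hbk))
    have hadj : G.Adj a b := by
      have := (hmin i h1 h2).1.1 (by exact_mod_cast he)
      rw [heab] at this
      exact this
    have hne' : s(a, b) ≠ s(s, t) := heab ▸ hne
    have hkj : k < j + 2 := by
      by_contra h
      push_neg at h
      exact no_far_edge G h3 s t hst q E hall hnested h hkq haj hbk hadj hne'
    have hji' : j = i - 1 := by omega
    have hki : k = i := by omega
    exact ⟨a, hji' ▸ haj, b, hki ▸ hbk, heab⟩
  · intro j k hjq hkq hjk a ha b hb hadj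
    obtain ⟨hadj', hne⟩ := SimpleGraph.deleteEdges_adj.mp hadj
    exact no_far_edge G h3 s t hst q E hall hnested hjk hkq ha hb hadj'
      (by simpa using hne)
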